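/- There exists a constant c₃ > 1, independent of u, n and k, with the following property: for every integer k ≥ 1, every cyclically reduced word u of length 2k beginning with b or b⁻¹ and ending with a, and every n ≥ 1, the number of reduced words of length n that are readable in the reduced u-barbell graph is at most c₃·2^k·2^{n/(4k+2)}. -/
import Mathlib


open scoped Classical

/-- Letters of the modular group alphabet: `0 = a`, `1 = b`, `2 = b⁻¹`. -/
abbrev ModLetter := Fin 3

/-- Words over the alphabet `A = {a, b, b⁻¹}`. -/
abbrev ModWord := List ModLetter

def La : ModLetter := 0
def Lb : ModLetter := 1
def Lbinv : ModLetter := 2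

/-- The letter-inverse map: `a ↦ a`, `b ↦ b⁻¹`, `b⁻¹ ↦ b`. -/
def invLetter (x : ModLetter) : ModLetter :=
  if x = Lb then Lbinv else if x = Lbinv then Lb else x

/-- Formal inverse of a word. -/
def wordInv (w : ModWord) : ModWord := (w.map invLetter).reverse

/-- The automorphism `η` applied letterwise: `a ↦ a`, `b ↦ b⁻¹`, `b⁻¹ ↦ b`. -/
def etaWord (w : ModWord) : ModWord := w.map invLetter

/-- `η^δ` for `δ ∈ {0,1}` (encoded as a `Bool`). -/
def etaPow (δ : Bool) (w : ModWord) : ModWord := if δ then etaWord w else w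

/-- A pair of adjacent letters is admissible iff exactly one of the two letters is `a`;
this excludes precisely the forbidden subwords `aa`, `bb⁻¹`, `b⁻¹b`, `bb`, `b⁻¹b⁻¹`. -/
def OkPair (x y : ModLetter) : Prop := (x = La ∧ y ≠ La) ∨ (x ≠ La ∧ y = La)

/-- A word is reduced iff it contains no forbidden length-two subword. -/
def Reduced (w : ModWord) : Prop := w.Chain' OkPair

/-- A word is cyclically reduced iff all of its cyclic permutations are reduced. -/
def CyclicallyReduced (w : ModWord) : Prop := ∀ k, Reduced (w.rotate k)

/-- `w` is a cyclic permutation of `v`. -/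
def IsCyclicPermOf (w v : ModWord) : Prop := ∃ k, w = v.rotate k

/-- The defining relators `a²`, `b³` of the modular group. -/
def modRels : Set (FreeGroup (Fin 2)) := {FreeGroup.of 0 ^ 2, FreeGroup.of 1 ^ 3}

/-- The modular group `M = ⟨a, b | a² = b³ = 1⟩`. -/
abbrev Mgrp := PresentedGroup modRels

/-- The generator `a` of `M`. -/
def ma : Mgrp := PresentedGroup.of 0

/-- The generator `b` of `M`. -/
def mb : Mgrp := PresentedGroup.of 1

def letterToM (x : ModLetter) : Mgrp :=
  if x = La then ma else if x = Lb then mb else mb⁻¹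

/-- The element of `M` represented by a word. -/
def wordToM (w : ModWord) : Mgrp := (w.map letterToM).prod

/-- The normal closure in `M` of a set of words. -/
def relSubgroup (S : Set ModWord) : Subgroup Mgrp :=
  Subgroup.normalClosure (wordToM '' S)

instance relSubgroup_normal (S : Set ModWord) : (relSubgroup S).Normal :=
  Subgroup.normalClosure_normal

/-- The quotient group `M/⟨⟨S⟩⟩`. -/
def Gquot (S : Set ModWord) : Type := Mgrp ⧸ relSubgroup S

instance (S : Set ModWord) : Group (Gquot S) :=
  inferInstanceAs (Group (Mgrp ⧸ relSubgroup S))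

/-- The quotient projection `M → M/⟨⟨S⟩⟩`. -/
def projG (S : Set ModWord) : Mgrp →* Gquot S := QuotientGroup.mk' (relSubgroup S)

/-- The image of the generator `a` in the quotient. -/
def aG (S : Set ModWord) : Gquot S := projG S ma

/-- The image of the generator `b` in the quotient. -/
def bG (S : Set ModWord) : Gquot S := projG S mb

/-- `u` is admissible as the bar of a reduced `u`-barbell graph: cyclically reduced,
of even positive length, beginning with `b` or `b⁻¹` and ending with `a`. -/
def BarbellWord (u : ModWord) : Prop :=
  CyclicallyReduced u ∧ 0 < u.length ∧ u.length % 2 = 0 ∧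
    (u.head? = some Lb ∨ u.head? = some Lbinv) ∧ u.getLast? = some La

/-- The block `a u b^ε u⁻¹`. -/
def barbellBlock (u : ModWord) (ε : Bool) : ModWord :=
  [La] ++ u ++ [if ε then Lb else Lbinv] ++ wordInv u

/-- A word `w` is readable in the reduced `u`-barbell graph iff it is a subword of some
concatenation `(a u b^{ε₁} u⁻¹) ⋯ (a u b^{ε_t} u⁻¹)`. -/
def BarbellReadable (u w : ModWord) : Prop :=
  ∃ εs : List Bool, w <:+: (εs.map (barbellBlock u)).flatten

/-- `w` is `θ`-readable. -/
def ThetaReadable (θ : ℝ) (w : ModWord) : Prop :=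
  ∃ (v u : ModWord) (k : ℕ),
    (v <:+: w.rotate k ∨ v <:+: (wordInv w).rotate k) ∧
    (w.length : ℝ) ≤ 2 * v.length ∧
    BarbellWord u ∧ (u.length : ℝ) ≤ θ * v.length ∧
    BarbellReadable u v

/-- A set of words is symmetrized if it is closed under cyclic permutations and inverses. -/
def Symmetrized (R : Set ModWord) : Prop :=
  ∀ w ∈ R, (∀ k, w.rotate k ∈ R) ∧ wordInv w ∈ R

/-- The `C'(λ)` small cancellation condition over `M`. -/
def Cprime (lam : ℝ) (R : Set ModWord) : Prop :=
  ∀ r ∈ R, ∀ r' ∈ R, r ≠ r' → ∀ u : ModWord, u ≠ [] → u <+: r → u <+: r' →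
    (u.length : ℝ) < lam * r.length

/-- The symmetrized closure `R(τ)` of a tuple of words. -/
def symClosure {m : ℕ} (τ : Fin m → ModWord) : Set ModWord :=
  {w | ∃ i k, w = (τ i).rotate k ∨ w = (wordInv (τ i)).rotate k}

/-- The genericity condition `Q_m(λ)` (for a tuple of cyclically reduced words). -/
def QCond {m : ℕ} (lam : ℝ) (τ : Fin m → ModWord) : Prop :=
  (∀ i, CyclicallyReduced (τ i)) ∧
  (∀ i, ¬ ThetaReadable (1/40) (τ i)) ∧
  Cprime lam (symClosure τ) ∧
  (∀ i, ¬ ∃ (s : Mgrp) (k : ℕ), 2 ≤ k ∧ wordToM (τ i) = s ^ k) ∧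
  (∀ i j, i ≠ j → ¬ IsCyclicPermOf (τ i) (τ j) ∧ ¬ IsCyclicPermOf (τ i) (wordInv (τ j))) ∧
  (∀ i j, ¬ ∃ (z : ModWord) (k k' : ℕ),
      z <:+: (etaWord (τ i)).rotate k ∧ (τ i).length < 3 * z.length ∧
      (z <:+: (τ j).rotate k' ∨ z <:+: (wordInv (τ j)).rotate k')) ∧
  (∀ i, ¬ IsCyclicPermOf (τ i) (wordInv (τ i))) ∧
  (∀ i, 1200 ≤ (τ i).length)

/-- The condition `U_m(λ) = Q_m(λ) ∩ T_m`. -/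
def UCond {m : ℕ} (lam : ℝ) (τ : Fin m → ModWord) : Prop :=
  QCond lam τ ∧ ∀ i j, (τ i).length = (τ j).length

/-- `|τ| = max_i |r_i|`. -/
def tupleLen {m : ℕ} (τ : Fin m → ModWord) : ℕ :=
  Finset.univ.sup fun i => (τ i).length

/-- `C^m`: tuples of cyclically reduced words. -/
def Cm (m : ℕ) : Set (Fin m → ModWord) := {τ | ∀ i, CyclicallyReduced (τ i)}

/-- `T_m`: tuples of cyclically reduced words, all of the same length. -/
def Tm (m : ℕ) : Set (Fin m → ModWord) :=
  {τ | (∀ i, CyclicallyReduced (τ i)) ∧ ∀ i j, (τ i).length = (τ j).length}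

/-- `γ(n,S)`: the number of tuples in `S` with `|τ| = n`. -/
noncomputable def gammaCount {m : ℕ} (S : Set (Fin m → ModWord)) (n : ℕ) : ℕ :=
  Nat.card {τ : Fin m → ModWord // τ ∈ S ∧ tupleLen τ = n}

/-- `ρ(n,S)`: the number of tuples in `S` with `|τ| ≤ n`. -/
noncomputable def rhoCount {m : ℕ} (S : Set (Fin m → ModWord)) (n : ℕ) : ℕ :=
  Nat.card {τ : Fin m → ModWord // τ ∈ S ∧ tupleLen τ ≤ n}

/-- `S` is exponentially generic in `X`. -/
def ExpGenericIn {m : ℕ} (S X : Set (Fin m → ModWord)) : Prop :=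
  ∃ K : ℝ, 0 < K ∧ ∃ q : ℝ, 0 < q ∧ q < 1 ∧
    ∀ n : ℕ, 1 ≤ n → 1 - (rhoCount S n : ℝ) / (rhoCount X n : ℝ) ≤ K * q ^ n

/-- The image of `ψ` is a finite cyclic group of order `1`, `2` or `3`. -/
def SmallCyclicImage {G H : Type*} [Group G] [Group H] (ψ : G →* H) : Prop :=
  ∃ x : H, ψ.range = Subgroup.zpowers x ∧
    (orderOf x = 1 ∨ orderOf x = 2 ∨ orderOf x = 3)

/-- A subgroup `H ≤ G` is malnormal: for `g ∉ H`, `gHg⁻¹ ∩ H = 1`. -/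
def Malnormal {G : Type*} [Group G] (H : Subgroup G) : Prop :=
  ∀ g : G, g ∉ H → ∀ x ∈ H, g * x * g⁻¹ ∈ H → x = 1

/-- The tuple obtained from `τ` by reordering by `π`, rotating entries by `k i`,
inverting the entries with `ε i = true`, and applying `η` iff `δ = true`. -/
def tupleTransform {m : ℕ} (π : Equiv.Perm (Fin m)) (k : Fin m → ℕ) (ε : Fin m → Bool)
    (δ : Bool) (τ : Fin m → ModWord) : Fin m → ModWord :=
  fun i => etaPow δ ((if ε i then wordInv (τ (π i)) else τ (π i)).rotate (k i))

/-- The parameters of a transformation are formally trivial on `τ`. -/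
def TrivialParams {m : ℕ} (π : Equiv.Perm (Fin m)) (k : Fin m → ℕ) (ε : Fin m → Bool)
    (δ : Bool) (τ : Fin m → ModWord) : Prop :=
  π = Equiv.refl (Fin m) ∧ (∀ i, k i % (τ i).length = 0) ∧ (∀ i, ε i = false) ∧ δ = false

/-- The condition `U'_m(λ)`. -/
def UprimeCond {m : ℕ} (lam : ℝ) (τ : Fin m → ModWord) : Prop :=
  UCond lam τ ∧
  ∀ π k ε δ, ¬ TrivialParams π k ε δ τ →
    (fun i => (τ i).take ⌊lam * (tupleLen τ : ℝ)⌋₊) ≠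
      (fun i => ((tupleTransform π k ε δ τ) i).take ⌊lam * (tupleLen τ : ℝ)⌋₊)

/-- The number of isomorphism classes of groups `G_τ` over all `m`-tuples `τ` of
cyclically reduced words of length exactly `n`. -/
noncomputable def Icount (m n : ℕ) : ℕ :=
  Nat.card (Quot (fun τ σ : {τ : Fin m → ModWord //
      (∀ i, CyclicallyReduced (τ i)) ∧ ∀ i, (τ i).length = n} =>
    Nonempty (Gquot (Set.range τ.1) ≃* Gquot (Set.range σ.1))))

/-- The absolute `T`-invariant `T₁(G)`: the minimal total relator length of a finite
presentation of `G`. -/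
noncomputable def T1inv (G : Type) [Group G] : ℕ :=
  sInf {ℓ : ℕ | ∃ (s t : ℕ) (rels : Fin t → FreeGroup (Fin s)),
    Nonempty (G ≃* PresentedGroup (Set.range rels)) ∧
    ℓ = ∑ i, ((rels i).toWord.length)}

lemma wordInv_length (w : ModWord) : (wordInv w).length = w.length := by
  simp [wordInv]

lemma barbellBlock_length (u : ModWord) (ε : Bool) :
    (barbellBlock u ε).length = 2 * u.length + 2 := by
  simp [barbellBlock, wordInv_length]; ring

lemma flat_len (u : ModWord) (L : ℕ) (hL : ∀ ε, (barbellBlock u ε).length = L)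
    (A : List Bool) : ((A.map (barbellBlock u)).flatten).length = A.length * L := by
  induction A with
  | nil => simp
  | cons a t ih => simp [ih, hL, Nat.add_mul]; omega

lemma drop_take_append {α : Type*} (X Y : List α) (s n : ℕ) (h : s + n ≤ X.length) :
    (((X ++ Y).drop s).take n) = ((X.drop s).take n) := by
  rw [List.drop_append_of_le_length (by omega), List.take_append_of_le_length]
  rw [List.length_drop]; omega

lemma readable_decomp (u : ModWord) (L t₀ n : ℕ)
    (hL : ∀ ε, (barbellBlock u ε).length = L) (hL0 : 0 < L) (hn : 1 ≤ n)
    (ht : L + n ≤ t₀ * L) (w : ModWord) (hw : w.length = n)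
    (hr : BarbellReadable u w) :
    ∃ (s : ℕ) (εs' : List Bool), s < L ∧ εs'.length = t₀ ∧
      w = (((List.map (barbellBlock u) εs').flatten).drop s).take n := by
  obtain ⟨εs, pre, post, hflat⟩ := hr
  set F := (εs.map (barbellBlock u)).flatten with hF
  have hFlen : F.length = εs.length * L := flat_len u L hL εs
  have hlen : pre.length + n + post.length = εs.length * L := by
    rw [← hFlen, ← hflat]; simp [hw]; omega
  set q := pre.length / L with hqdef
  set s := pre.length % L with hsdef
  have hqs : q * L + s = pre.length := by rw [Nat.mul_comm]; exact Nat.div_add_mod pre.length L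
  have hsL : s < L := Nat.mod_lt _ hL0
  have hq : q < εs.length := by
    by_contra hcon
    push_neg at hcon
    have : εs.length * L ≤ q * L := Nat.mul_le_mul_right L hcon
    omega
  -- w as drop/take of F
  have w_eq : (F.drop pre.length).take n = w := by
    rw [← hflat, List.append_assoc, List.drop_left, ← hw, List.take_left]
  set A := εs.drop q with hA
  set G := (A.map (barbellBlock u)).flatten with hG
  have hGlen : G.length = A.length * L := flat_len u L hL A
  have hAlen : A.length = εs.length - q := by simp [hA]
  have hFQ : F.drop (q * L) = G := by
    conv_lhs => rw [hF, show εs = εs.take q ++ εs.drop q from (List.take_append_drop q εs).symm]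
    rw [List.map_append, List.flatten_append,
      show q * L = ((εs.take q).map (barbellBlock u)).flatten.length by
        rw [flat_len u L hL, List.length_take, min_eq_left (le_of_lt hq)]]
    rw [List.drop_left]
  have w_eq2 : (G.drop s).take n = w := by
    rw [← hFQ, List.drop_drop, hqs, w_eq]
  have hsnA : s + n ≤ A.length * L := by
    have hsub : (εs.length - q) * L = εs.length * L - q * L := Nat.sub_mul _ _ _
    rw [hAlen]
    omega
  have hsnt : s + n ≤ t₀ * L := by omega
  have hP : s + n ≤ ((A.take t₀).map (barbellBlock u)).flatten.length := by
    rw [flat_len u L hL, List.length_take]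
    rcases le_total t₀ A.length with h | h
    · rw [min_eq_left h]; exact hsnt
    · rw [min_eq_right h]; exact hsnA
  have hGsplit : G = ((A.take t₀).map (barbellBlock u)).flatten ++
      ((A.drop t₀).map (barbellBlock u)).flatten := by
    conv_lhs => rw [hG, show A = A.take t₀ ++ A.drop t₀ from (List.take_append_drop t₀ A).symm]
    rw [List.map_append, List.flatten_append]
  refine ⟨s, A.take t₀ ++ List.replicate (t₀ - A.length) true, hsL, ?_, ?_⟩
  · simp [List.length_take, List.length_replicate]; omega
  · rw [List.map_append, List.flatten_append, drop_take_append _ _ _ _ hP, ← w_eq2,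
      hGsplit, drop_take_append _ _ _ _ hP]

lemma aux_pow (k : ℕ) (hk : 1 ≤ k) : 16 * k + 8 ≤ 12 * 2 ^ k := by
  induction k with
  | zero => omega
  | succ m ih =>
    rcases Nat.eq_or_lt_of_le hk with h | h
    · simp [← h]
    · have hm : 1 ≤ m := by omega
      have := ih hm
      have h2 : 12 * 2 ^ m ≥ 24 := by
        calc 12 * 2 ^ m ≥ 12 * 2 ^ 1 := by
              apply Nat.mul_le_mul_left
              exact Nat.pow_le_pow_right (by norm_num) hm
        _ = 24 := by norm_num
      rw [pow_succ]
      omega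

/-- There is a constant `c₃ > 1`, independent of `u`, `n` and `k`, such
that for every `k ≥ 1`, every admissible barbell word `u` of length `2k` and every
`n ≥ 1`, the number of reduced words of length `n` readable in the reduced `u`-barbell
graph is at most `c₃·2^k·2^{n/(4k+2)}`. -/
theorem count_barbell_readable_words :
    ∃ c₃ : ℝ, 1 < c₃ ∧ ∀ k : ℕ, 1 ≤ k → ∀ u : ModWord, BarbellWord u → u.length = 2 * k →
      ∀ n : ℕ, 1 ≤ n →
        (Nat.card {w : ModWord // Reduced w ∧ w.length = n ∧ BarbellReadable u w} : ℝ) ≤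
          c₃ * (2 : ℝ) ^ k * (2 : ℝ) ^ ((n : ℝ) / (4 * (k : ℝ) + 2)) := by
  refine ⟨12, by norm_num, ?_⟩
  intro k hk u hu hulen n hn
  set L := 4 * k + 2 with hLdef
  have hL0 : 0 < L := by omega
  have hL : ∀ ε, (barbellBlock u ε).length = L := by
    intro ε; rw [barbellBlock_length, hulen]; omega
  set t₀ := n / L + 2 with ht0
  have ht : L + n ≤ t₀ * L := by
    have h1 := Nat.div_add_mod n L
    have h2 : n % L < L := Nat.mod_lt _ hL0
    have h3 : t₀ * L = (n / L) * L + 2 * L := by rw [ht0]; ring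
    have h4 : L * (n / L) = (n / L) * L := Nat.mul_comm _ _
    omega
  -- injection into Fin L × Vector Bool t₀
  have hdec : ∀ w : {w : ModWord // Reduced w ∧ w.length = n ∧ BarbellReadable u w},
      ∃ p : Fin L × List.Vector Bool t₀,
        (((p.2.1.map (barbellBlock u)).flatten).drop p.1.1).take n = w.1 := by
    rintro ⟨w, hred, hwl, hrd⟩
    obtain ⟨s, εs', hs, hl, he⟩ := readable_decomp u L t₀ n hL hL0 hn ht w hwl hrd
    exact ⟨(⟨s, hs⟩, ⟨εs', hl⟩), he.symm⟩
  choose f hf using hdec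
  have hfinj : Function.Injective f := by
    intro a b hab
    apply Subtype.ext
    rw [← hf a, ← hf b, hab]
  have hcard : Nat.card {w : ModWord // Reduced w ∧ w.length = n ∧ BarbellReadable u w}
      ≤ L * 2 ^ t₀ := by
    have h := Nat.card_le_card_of_injective f hfinj
    have h2 : Nat.card (Fin L × List.Vector Bool t₀) = L * 2 ^ t₀ := by
      rw [Nat.card_prod, Nat.card_eq_fintype_card, Nat.card_eq_fintype_card,
        Fintype.card_fin, card_vector, Fintype.card_bool]
    rwa [h2] at h
  have hcast : (Nat.card {w : ModWord // Reduced w ∧ w.length = n ∧ BarbellReadable u w} : ℝ)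
      ≤ (L : ℝ) * 2 ^ t₀ := by
    calc (Nat.card {w : ModWord // Reduced w ∧ w.length = n ∧ BarbellReadable u w} : ℝ)
        ≤ ((L * 2 ^ t₀ : ℕ) : ℝ) := Nat.cast_le.mpr hcard
      _ = (L : ℝ) * 2 ^ t₀ := by push_cast; ring
  have hexp : (2 : ℝ) ^ (n / L : ℕ) ≤ (2 : ℝ) ^ ((n : ℝ) / (4 * (k : ℝ) + 2)) := by
    rw [← Real.rpow_natCast 2 (n / L)]
    apply Real.rpow_le_rpow_of_exponent_le one_le_two
    have h1 : ((n / L : ℕ) : ℝ) ≤ (n : ℝ) / (L : ℝ) := Nat.cast_div_le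
    have h2 : (L : ℝ) = 4 * (k : ℝ) + 2 := by rw [hLdef]; push_cast; ring
    rw [h2] at h1; exact h1
  have hLk : (L : ℝ) * 4 ≤ 12 * 2 ^ k := by
    have := aux_pow k hk
    have h2 : (16 * k + 8 : ℝ) ≤ 12 * 2 ^ k := by exact_mod_cast this
    have h3 : (L : ℝ) * 4 = 16 * (k : ℝ) + 8 := by rw [hLdef]; push_cast; ring
    linarith
  calc (Nat.card {w : ModWord // Reduced w ∧ w.length = n ∧ BarbellReadable u w} : ℝ)
      ≤ (L : ℝ) * 2 ^ t₀ := hcast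
    _ = ((L : ℝ) * 4) * 2 ^ (n / L : ℕ) := by rw [ht0, pow_add]; ring
    _ ≤ (12 * 2 ^ k) * 2 ^ ((n : ℝ) / (4 * (k : ℝ) + 2)) := by
        apply mul_le_mul hLk hexp (by positivity) (by positivity)
    _ = 12 * (2 : ℝ) ^ k * (2 : ℝ) ^ ((n : ℝ) / (4 * (k : ℝ) + 2)) := by ring
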